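/- arXiv:2503.01110 — 2 statements merged into one kernel-verified Lean document; each statement's English description precedes it below -/
import Mathlib

section
/- Let f : ℝ^n → ℝ ∪ {+∞} be a polyhedral M-convex function with bounded nonempty effective domain. Let y ∈ dom f with φ_ℝ(y) < 0, let i ∈ N satisfy f'_ℝ(y; i, j) > φ_ℝ(y) for every j ∈ N ∖ {i}, and let h, k ∈ N be distinct elements with f'_ℝ(y; h, k) = φ_ℝ(y). Then for every real λ with 0 < λ and f(y + λ(χ_h − χ_k)) − f(y) = λ φ_ℝ(y), the vector ŷ = y + λ(χ_h − χ_k) satisfies f'_ℝ(ŷ; i, j) > φ_ℝ(y) for every j ∈ N ∖ {i}. -/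
noncomputable section

open scoped BigOperators

/-- The `i`-th unit vector in `ℝ^n`. -/
def chiR {n : ℕ} (i : Fin n) : Fin n → ℝ := fun k => if k = i then 1 else 0

/-- The function never takes the value `-∞`, i.e. its codomain is `ℝ ∪ {+∞}`. -/
def NoBotR {n : ℕ} (f : (Fin n → ℝ) → EReal) : Prop := ∀ x, f x ≠ ⊥

/-- `f` is polyhedral convex: its epigraph is a nonempty intersection of finitely many
closed affine halfspaces. -/
def PolyhedralConvex {n : ℕ} (f : (Fin n → ℝ) → EReal) : Prop :=
  (∃ (x : Fin n → ℝ) (t : ℝ), f x ≤ (t : EReal)) ∧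
  ∃ (m : ℕ) (a : Fin m → Fin n → ℝ) (b c : Fin m → ℝ),
    ∀ (x : Fin n → ℝ) (t : ℝ),
      f x ≤ (t : EReal) ↔ ∀ k : Fin m, (∑ i, a k i * x i) + b k * t ≤ c k

/-- The exchange axiom (M-EXC[ℝ]). -/
def MExcR {n : ℕ} (f : (Fin n → ℝ) → EReal) : Prop :=
  ∀ x y : Fin n → ℝ, f x ≠ ⊤ → f y ≠ ⊤ →
    ∀ i : Fin n, y i < x i →
      ∃ j : Fin n, x j < y j ∧ ∃ ε₀ : ℝ, 0 < ε₀ ∧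
        ∀ ε : ℝ, 0 ≤ ε → ε ≤ ε₀ →
          f (x - ε • (chiR i - chiR j)) + f (y + ε • (chiR i - chiR j)) ≤ f x + f y

/-- Polyhedral M-convex function. -/
def PolyMConvex {n : ℕ} (f : (Fin n → ℝ) → EReal) : Prop :=
  PolyhedralConvex f ∧ MExcR f

/-- The directional derivative `f'_ℝ(x; i, j) = lim_{α ↓ 0} (f(x + α(χ_i - χ_j)) - f(x))/α`.
For a (polyhedral) convex function the difference quotient is nondecreasing in `α`, so the
limit equals the infimum of the difference quotients over `α > 0`. -/
def slopeR {n : ℕ} (f : (Fin n → ℝ) → EReal) (x : Fin n → ℝ) (i j : Fin n) : EReal :=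
  ⨅ α : {a : ℝ // 0 < a}, (f (x + α.1 • (chiR i - chiR j)) - f x) * (((α.1)⁻¹ : ℝ) : EReal)

/-- `φ_ℝ(x) = min_{i, j ∈ N} f'_ℝ(x; i, j)`. -/
def phiRp {n : ℕ} (f : (Fin n → ℝ) → EReal) (x : Fin n → ℝ) : EReal :=
  ⨅ i : Fin n, ⨅ j : Fin n, slopeR f x i j

/-- Bounded effective domain. -/
def BddDomR {n : ℕ} (f : (Fin n → ℝ) → EReal) : Prop :=
  ∃ C : ℝ, ∀ x : Fin n → ℝ, f x ≠ ⊤ → ∀ i, |x i| ≤ C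

lemma move_apply {n : ℕ} (x : Fin n → ℝ) (ε : ℝ) (p j q : Fin n) :
    (x + ε • (chiR p - chiR j)) q
      = x q + ε * ((if q = p then (1:ℝ) else 0) - (if q = j then (1:ℝ) else 0)) := by
  simp [chiR, Pi.add_apply, Pi.smul_apply, Pi.sub_apply]

lemma move_apply_sub {n : ℕ} (x : Fin n → ℝ) (ε : ℝ) (p j q : Fin n) :
    (x - ε • (chiR p - chiR j)) q
      = x q - ε * ((if q = p then (1:ℝ) else 0) - (if q = j then (1:ℝ) else 0)) := by
  simp [chiR, Pi.sub_apply, Pi.smul_apply]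

lemma sum_ite_single {n : ℕ} (p : Fin n) (A : ℝ) :
    ∑ q : Fin n, (if q = p then A else 0) = A := by
  simp

lemma sum_abs_support2 {n : ℕ} (p q : Fin n) (hpq : p ≠ q) (g : Fin n → ℝ)
    (hg : ∀ t, t ≠ p → t ≠ q → g t = 0) :
    ∑ t, |g t| = |g p| + |g q| := by
  have : ∑ t ∈ ({p, q} : Finset (Fin n)), |g t| = ∑ t, |g t| := by
    refine Finset.sum_subset (Finset.subset_univ _) ?_
    intro t _ ht
    simp only [Finset.mem_insert, Finset.mem_singleton, not_or] at ht
    rw [hg t ht.1 ht.2, abs_zero]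
  rw [← this, Finset.sum_insert (by simp [hpq]), Finset.sum_singleton]

lemma sum_abs_support3 {n : ℕ} (p q r : Fin n) (hpq : p ≠ q) (hpr : p ≠ r) (hqr : q ≠ r)
    (g : Fin n → ℝ) (hg : ∀ t, t ≠ p → t ≠ q → t ≠ r → g t = 0) :
    ∑ t, |g t| = |g p| + |g q| + |g r| := by
  have : ∑ t ∈ ({p, q, r} : Finset (Fin n)), |g t| = ∑ t, |g t| := by
    refine Finset.sum_subset (Finset.subset_univ _) ?_
    intro t _ ht
    simp only [Finset.mem_insert, Finset.mem_singleton, not_or] at ht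
    rw [hg t ht.1 ht.2.1 ht.2.2, abs_zero]
  rw [← this, Finset.sum_insert (by simp [hpq, hpr]),
    Finset.sum_insert (by simp [hqr]), Finset.sum_singleton]
  ring

lemma sum_abs_support4 {n : ℕ} (p q r s : Fin n) (hpq : p ≠ q) (hpr : p ≠ r) (hps : p ≠ s)
    (hqr : q ≠ r) (hqs : q ≠ s) (hrs : r ≠ s)
    (g : Fin n → ℝ) (hg : ∀ t, t ≠ p → t ≠ q → t ≠ r → t ≠ s → g t = 0) :
    ∑ t, |g t| = |g p| + |g q| + |g r| + |g s| := by
  have : ∑ t ∈ ({p, q, r, s} : Finset (Fin n)), |g t| = ∑ t, |g t| := by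
    refine Finset.sum_subset (Finset.subset_univ _) ?_
    intro t _ ht
    simp only [Finset.mem_insert, Finset.mem_singleton, not_or] at ht
    rw [hg t ht.1 ht.2.1 ht.2.2.1 ht.2.2.2, abs_zero]
  rw [← this, Finset.sum_insert (by simp [hpq, hpr, hps]),
    Finset.sum_insert (by simp [hqr, hqs]), Finset.sum_insert (by simp [hrs]),
    Finset.sum_singleton]
  ring
lemma slope_le_quot {n : ℕ} (f : (Fin n → ℝ) → EReal) (x : Fin n → ℝ) (i j : Fin n)
    (α : ℝ) (hα : 0 < α) :
    slopeR f x i j ≤ (f (x + α • (chiR i - chiR j)) - f x) * ((α⁻¹ : ℝ) : EReal) :=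
  iInf_le _ (⟨α, hα⟩ : {a : ℝ // 0 < a})

/-- real form of the lower bound `f (x + α d) ≥ f x + α * r` when `(r : EReal) ≤ slope`. -/
lemma quot_lower {n : ℕ} (f : (Fin n → ℝ) → EReal) (x : Fin n → ℝ) (i j : Fin n)
    (u r α : ℝ) (hα : 0 < α) (hfx : f x = (u : EReal))
    (hr : (r : EReal) ≤ slopeR f x i j) (hbot : f (x + α • (chiR i - chiR j)) ≠ ⊥) :
    ((u + α * r : ℝ) : EReal) ≤ f (x + α • (chiR i - chiR j)) := by
  rcases eq_or_ne (f (x + α • (chiR i - chiR j))) ⊤ with htop | htop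
  · rw [htop]; exact le_top
  · lift f (x + α • (chiR i - chiR j)) to ℝ using ⟨htop, hbot⟩ with v hv
    have h1 : (r : EReal) ≤ ((v : EReal) - u) * ((α⁻¹ : ℝ) : EReal) := by
      refine le_trans hr ?_
      have := slope_le_quot f x i j α hα
      rw [← hv, hfx] at this; exact this
    rw [← EReal.coe_sub, ← EReal.coe_mul, EReal.coe_le_coe_iff] at h1
    rw [EReal.coe_le_coe_iff]
    have h2 : r * α ≤ (v - u) * α⁻¹ * α := by nlinarith
    rw [mul_assoc, inv_mul_cancel₀ (ne_of_gt hα), mul_one] at h2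
    linarith

/-- convexity from the polyhedral representation -/
lemma fconvex {n m : ℕ} (f : (Fin n → ℝ) → EReal) (a : Fin m → Fin n → ℝ) (b c : Fin m → ℝ)
    (hrep : ∀ (x : Fin n → ℝ) (t : ℝ),
      f x ≤ (t : EReal) ↔ ∀ k : Fin m, (∑ i, a k i * x i) + b k * t ≤ c k)
    (x z : Fin n → ℝ) (s t θ : ℝ) (hx : f x ≤ (s : EReal)) (hz : f z ≤ (t : EReal))
    (h0 : 0 ≤ θ) (h1 : θ ≤ 1) :
    f (θ • x + (1 - θ) • z) ≤ ((θ * s + (1 - θ) * t : ℝ) : EReal) := by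
  rw [hrep] at hx hz ⊢
  intro k
  have hx' := hx k
  have hz' := hz k
  have hsum : ∑ i, a k i * (θ • x + (1 - θ) • z) i
      = θ * (∑ i, a k i * x i) + (1 - θ) * (∑ i, a k i * z i) := by
    rw [Finset.mul_sum, Finset.mul_sum, ← Finset.sum_add_distrib]
    refine Finset.sum_congr rfl fun q _ => ?_
    simp [Pi.add_apply, Pi.smul_apply, smul_eq_mul]; ring
  rw [hsum]
  nlinarith [mul_le_mul_of_nonneg_left hx' h0, mul_le_mul_of_nonneg_left hz' (by linarith : (0:ℝ) ≤ 1 - θ)]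
section rep
variable {n m : ℕ} (a : Fin m → Fin n → ℝ) (b c : Fin m → ℝ)

def Srep : Finset (Fin m) := Finset.univ.filter (fun k => b k < 0)

def Drep : Set (Fin n → ℝ) := {x | ∀ k, ¬ b k < 0 → (∑ i, a k i * x i) ≤ c k}

def Frep (hS : (Srep b).Nonempty) (x : Fin n → ℝ) : ℝ :=
  (Srep b).sup' hS (fun k => ((∑ i, a k i * x i) - c k) / (-(b k)))

variable {f : (Fin n → ℝ) → EReal}
variable (hrep : ∀ (x : Fin n → ℝ) (t : ℝ),
      f x ≤ (t : EReal) ↔ ∀ k : Fin m, (∑ i, a k i * x i) + b k * t ≤ c k)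

include hrep

lemma bnonpos (x : Fin n → ℝ) (t : ℝ) (hx : f x ≤ (t : EReal)) (k : Fin m) : b k ≤ 0 := by
  by_contra hbk
  push_neg at hbk
  set A := ∑ i, a k i * x i with hA
  have h1 : ∀ t' : ℝ, t ≤ t' → A + b k * t' ≤ c k := by
    intro t' ht'
    have : f x ≤ (t' : EReal) := le_trans hx (by exact_mod_cast ht')
    exact (hrep x t').1 this k
  have h2 := h1 (max t ((c k - A) / b k + 1)) (le_max_left _ _)
  have h3 : (c k - A) / b k + 1 ≤ max t ((c k - A) / b k + 1) := le_max_right _ _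
  have h4 : A + b k * ((c k - A) / b k + 1) ≤ c k := by
    nlinarith [mul_le_mul_of_nonneg_left h3 (le_of_lt hbk)]
  rw [mul_add, mul_div_cancel₀ _ (ne_of_gt hbk)] at h4
  linarith

lemma Sne_rep (y : Fin n → ℝ) (u : ℝ) (hy : f y = (u : EReal)) : (Srep b).Nonempty := by
  by_contra hS
  rw [Finset.not_nonempty_iff_eq_empty] at hS
  have hb0 : ∀ k, ¬ b k < 0 := by
    intro k
    have : k ∉ Srep b := by rw [hS]; exact Finset.notMem_empty k
    simpa [Srep] using this
  have hyu : f y ≤ (u : EReal) := le_of_eq hy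
  have hcon := (hrep y u).1 hyu
  have : f y ≤ ((u - 1 : ℝ) : EReal) := by
    rw [hrep]
    intro k
    have hbk : b k = 0 := le_antisymm (bnonpos a b c hrep y u hyu k) (not_lt.1 (hb0 k))
    have := hcon k
    rw [hbk] at this ⊢
    linarith
  rw [hy, EReal.coe_le_coe_iff] at this
  linarith

lemma mem_D_of_ne_top (x : Fin n → ℝ) (u : ℝ) (hx : f x = (u : EReal)) : x ∈ Drep a b c := by
  intro k hk
  have hcon := (hrep x u).1 (le_of_eq hx) k
  have hbk : b k = 0 := le_antisymm (bnonpos a b c hrep x u (le_of_eq hx) k) (not_lt.1 hk)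
  rw [hbk] at hcon; linarith

lemma f_le_F (hb : ∀ k, b k ≤ 0) (hS : (Srep b).Nonempty) (x : Fin n → ℝ)
    (hx : x ∈ Drep a b c) :
    f x ≤ ((Frep a b c hS x : ℝ) : EReal) := by
  rw [hrep]
  intro k
  by_cases hk : b k < 0
  · have hmem : k ∈ Srep b := by simp [Srep, hk]
    have hle : ((∑ i, a k i * x i) - c k) / (-(b k)) ≤ Frep a b c hS x :=
      Finset.le_sup' (fun k => ((∑ i, a k i * x i) - c k) / (-(b k))) hmem
    rw [div_le_iff₀ (by linarith : (0:ℝ) < -(b k))] at hle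
    nlinarith
  · have := hx k hk
    have hbk : b k = 0 := le_antisymm (hb k) (not_lt.1 hk)
    rw [hbk]; linarith

lemma f_eq_F (hb : ∀ k, b k ≤ 0) (hS : (Srep b).Nonempty) (hbot : ∀ z, f z ≠ ⊥)
    (x : Fin n → ℝ) (hx : x ∈ Drep a b c) :
    f x = ((Frep a b c hS x : ℝ) : EReal) := by
  have hle := f_le_F a b c hrep hb hS x hx
  have htop : f x ≠ ⊤ := fun h => by rw [h] at hle; exact (not_le.2 (EReal.coe_lt_top _)) hle
  obtain ⟨u, hu⟩ : ∃ u : ℝ, f x = (u : EReal) :=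
    ⟨(f x).toReal, (EReal.coe_toReal htop (hbot x)).symm⟩
  rw [hu] at hle ⊢
  rw [EReal.coe_le_coe_iff] at hle
  rw [EReal.coe_eq_coe_iff]
  refine le_antisymm hle ?_
  have hcon := (hrep x u).1 (le_of_eq hu)
  show Finset.sup' _ hS _ ≤ u
  refine Finset.sup'_le hS _ fun k hk => ?_
  have hbk : b k < 0 := by simpa [Srep] using hk
  have := hcon k
  rw [div_le_iff₀ (by linarith : (0:ℝ) < -(b k))]
  nlinarith

omit hrep

lemma D_closed : IsClosed (Drep a b c) := by
  have : Drep a b c = ⋂ k, {x : Fin n → ℝ | ¬ b k < 0 → (∑ i, a k i * x i) ≤ c k} := by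
    ext x; simp [Drep, Set.mem_iInter]
  rw [this]
  refine isClosed_iInter fun k => ?_
  by_cases hk : b k < 0
  · simp only [hk, not_true_eq_false]
    have : {x : Fin n → ℝ | False → (∑ i, a k i * x i) ≤ c k} = Set.univ := by
      ext x; simp
    rw [this]; exact isClosed_univ
  · simp only [hk, not_false_eq_true, true_implies]
    exact isClosed_le (by continuity) continuous_const

lemma F_continuous (hS : (Srep b).Nonempty) : Continuous (Frep a b c hS) := by
  refine Continuous.finset_sup'_apply hS fun k _ => ?_
  exact (by continuity : Continuous fun x : Fin n → ℝ => ((∑ i, a k i * x i) - c k) / (-(b k)))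

lemma D_compact (hn : 0 < n) (C : ℝ) (hC : ∀ x ∈ Drep a b c, ∀ i, |x i| ≤ C)
    (hne : (Drep a b c).Nonempty) : IsCompact (Drep a b c) := by
  refine Metric.isCompact_of_isClosed_isBounded (D_closed a b c) ?_
  rw [Metric.isBounded_iff_subset_closedBall 0]
  refine ⟨C, fun x hx => ?_⟩
  rcases hne with ⟨x₀, hx₀⟩
  have hC0 : 0 ≤ C := le_trans (abs_nonneg _) (hC x₀ hx₀ ⟨0, hn⟩)
  rw [Metric.mem_closedBall, dist_zero_right]
  rw [pi_norm_le_iff_of_nonneg hC0]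
  intro i
  rw [Real.norm_eq_abs]
  exact hC x hx i

end rep
lemma l1_decrease {n : ℕ} (y z : Fin n → ℝ) (p j : Fin n) (hpj : p ≠ j) (ε : ℝ) (hε : 0 ≤ ε)
    (h1 : ε ≤ z p - y p) (h2 : ε ≤ y j - z j) :
    ∑ q, |(z - ε • (chiR p - chiR j)) q - y q| = (∑ q, |z q - y q|) - 2*ε := by
  have hpt : ∀ q, |(z - ε • (chiR p - chiR j)) q - y q|
      = |z q - y q| + ((if q = p then -ε else 0) + (if q = j then -ε else 0)) := by
    intro q
    by_cases hq : q = p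
    · subst hq
      have e : (z - ε • (chiR q - chiR j)) q - y q = z q - y q - ε := by
        rw [move_apply_sub, if_pos rfl, if_neg hpj]; ring
      rw [e, abs_of_nonneg (by linarith), abs_of_nonneg (by linarith), if_pos rfl,
        if_neg hpj]
      ring
    · by_cases hq' : q = j
      · subst hq'
        have e : (z - ε • (chiR p - chiR q)) q - y q = z q - y q + ε := by
          rw [move_apply_sub, if_neg hq, if_pos rfl]; ring
        rw [e, abs_of_nonpos (by linarith), abs_of_nonpos (by linarith), if_neg hq,
          if_pos rfl]
        ring
      · have e : (z - ε • (chiR p - chiR j)) q - y q = z q - y q := by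
          rw [move_apply_sub, if_neg hq, if_neg hq']; ring
        rw [e, if_neg hq, if_neg hq']
        ring
  rw [Finset.sum_congr rfl (fun q _ => hpt q), Finset.sum_add_distrib,
    Finset.sum_add_distrib, sum_ite_single, sum_ite_single]
  ring

lemma keyLB {n m : ℕ} {f : (Fin n → ℝ) → EReal} (a : Fin m → Fin n → ℝ) (b c : Fin m → ℝ)
    (hrep : ∀ (x : Fin n → ℝ) (t : ℝ),
      f x ≤ (t : EReal) ↔ ∀ k : Fin m, (∑ i, a k i * x i) + b k * t ≤ c k)
    (hbot : NoBotR f) (hexc : MExcR f)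
    (hb : ∀ k, b k ≤ 0) (hS : (Srep b).Nonempty)
    (hn : 0 < n) (C : ℝ) (hC : ∀ x ∈ Drep a b c, ∀ q, |x q| ≤ C)
    (y : Fin n → ℝ) (hyD : y ∈ Drep a b c)
    (i : Fin n) (φ δ : ℝ) (hδ : 0 < δ)
    (hφ : ∀ p q : Fin n, (φ : EReal) ≤ slopeR f y p q)
    (hφδ : ∀ j : Fin n, j ≠ i → ((φ + δ : ℝ) : EReal) ≤ slopeR f y i j) :
    ∀ z ∈ Drep a b c,
      Frep a b c hS y + φ * (∑ q, |z q - y q|) / 2 + δ * max (z i - y i) 0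
        ≤ Frep a b c hS z := by
  set F := Frep a b c hS with hFdef
  have hfF : ∀ x ∈ Drep a b c, f x = ((F x : ℝ) : EReal) := fun x hx =>
    f_eq_F a b c hrep hb hS hbot x hx
  suffices hρ : ∀ ρ : ℝ, 0 < ρ → ∀ z ∈ Drep a b c,
      F y + φ * (∑ q, |z q - y q|) / 2 + δ * max (z i - y i) 0 - ρ * (∑ q, |z q - y q|)
        ≤ F z by
    intro z hz
    set L := ∑ q, |z q - y q| with hL
    have hL0 : 0 ≤ L := Finset.sum_nonneg fun q _ => abs_nonneg _
    by_contra hlt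
    push_neg at hlt
    set G := F y + φ * L / 2 + δ * max (z i - y i) 0 with hG
    have hgap : 0 < G - F z := by linarith
    have hρpos : 0 < (G - F z) / (2 * (L + 1)) := by positivity
    have hρ' := hρ _ hρpos z hz
    have he : (G - F z) / (2 * (L + 1)) * (2 * (L + 1)) = G - F z := by
      field_simp
    nlinarith [mul_nonneg (le_of_lt hρpos) hL0]
  intro ρ hρpos
  classical
  set H : (Fin n → ℝ) → ℝ := fun z =>
    F z - (φ * (∑ q, |z q - y q|) / 2 + δ * max (z i - y i) 0
      - ρ * (∑ q, |z q - y q|)) with hHdef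
  have hℓc : Continuous fun z : Fin n → ℝ => ∑ q, |z q - y q| :=
    continuous_finset_sum _ fun q _ => ((continuous_apply q).sub continuous_const).abs
  have hHcont : Continuous H := by
    refine Continuous.sub (F_continuous a b c hS) ?_
    refine Continuous.sub (Continuous.add ?_ ?_) (continuous_const.mul hℓc)
    · exact (continuous_const.mul hℓc).div_const 2
    · exact continuous_const.mul (((continuous_apply i).sub continuous_const).max
        continuous_const)
  have hKc : IsCompact (Drep a b c) := D_compact a b c hn C hC ⟨y, hyD⟩
  obtain ⟨w, hwD, hwmin⟩ := hKc.exists_isMinOn ⟨y, hyD⟩ hHcont.continuousOn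
  suffices hw : F y ≤ H w by
    intro z hz
    have h2 : H w ≤ H z := hwmin hz
    have h3 : F y ≤ H z := le_trans hw h2
    simp only [hHdef] at h3
    linarith
  rcases eq_or_ne w y with rfl | hwy
  · have : H w = F w := by simp [hHdef]
    rw [this]
  exfalso
  have hfw : f w = ((F w : ℝ) : EReal) := hfF w hwD
  have hfy : f y = ((F y : ℝ) : EReal) := hfF y hyD
  have hwtop : f w ≠ ⊤ := by rw [hfw]; exact EReal.coe_ne_top _
  have hytop : f y ≠ ⊤ := by rw [hfy]; exact EReal.coe_ne_top _
  have core : ∀ p j : Fin n, y p < w p → w j < y j → ∀ s : ℝ,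
      (s : EReal) ≤ slopeR f y p j →
      (∃ ε₀ : ℝ, 0 < ε₀ ∧ ∀ ε : ℝ, 0 ≤ ε → ε ≤ ε₀ →
        f (w - ε • (chiR p - chiR j)) + f (y + ε • (chiR p - chiR j)) ≤ f w + f y) →
      (∀ ε' : ℝ, 0 < ε' → ε' ≤ w p - y p → ε' ≤ y j - w j →
        δ * (max (w i - y i) 0 - max ((w - ε' • (chiR p - chiR j)) i - y i) 0)
          ≤ ε' * (s - φ)) →
      False := by
    rintro p j hp hj s hs ⟨ε₀, hε₀, hex⟩ hmaxcond
    set d : Fin n → ℝ := chiR p - chiR j with hd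
    set ε := min ε₀ (min (w p - y p) (y j - w j)) with hε
    have hεpos : 0 < ε := lt_min hε₀ (lt_min (by linarith) (by linarith))
    have hε1 : ε ≤ w p - y p := le_trans (min_le_right _ _) (min_le_left _ _)
    have hε2 : ε ≤ y j - w j := le_trans (min_le_right _ _) (min_le_right _ _)
    have hineq := hex ε (le_of_lt hεpos) (min_le_left _ _)
    rw [hfw, hfy, ← EReal.coe_add] at hineq
    have hnt1 : f (w - ε • d) ≠ ⊤ := by
      intro htop
      rw [htop, EReal.top_add_of_ne_bot (hbot _)] at hineq
      exact (not_le.2 (EReal.coe_lt_top _)) hineq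
    have hnD : (w - ε • d) ∈ Drep a b c :=
      mem_D_of_ne_top a b c hrep _ ((f (w - ε • d)).toReal)
        (EReal.coe_toReal hnt1 (hbot _)).symm
    have hlow := quot_lower f y p j (F y) s ε hεpos hfy hs (hbot _)
    rw [hfF _ hnD] at hineq
    have hcomb : ((F (w - ε • d) + (F y + ε * s) : ℝ) : EReal)
        ≤ ((F w + F y : ℝ) : EReal) := by
      rw [EReal.coe_add]
      exact le_trans (add_le_add (le_refl _) hlow) hineq
    rw [EReal.coe_le_coe_iff] at hcomb
    have hpj : p ≠ j := fun hh => by rw [hh] at hp; linarith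
    have hldec := l1_decrease y w p j hpj ε (le_of_lt hεpos) hε1 hε2
    have hHn : H w ≤ H (w - ε • d) := hwmin hnD
    have hmax := hmaxcond ε hεpos hε1 hε2
    simp only [hHdef] at hHn
    rw [hldec] at hHn
    nlinarith [mul_pos hρpos hεpos]
  by_cases hzi : y i < w i
  · obtain ⟨j, hj, hexj⟩ := hexc w y hwtop hytop i hzi
    have hji : j ≠ i := fun hh => by rw [hh] at hj; linarith
    refine core i j hzi hj (φ + δ) (hφδ j hji) hexj ?_
    intro ε' hε' h1 h2
    have hji' : (i : Fin n) ≠ j := fun hh => hji hh.symm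
    have e : (w - ε' • (chiR i - chiR j)) i - y i = w i - y i - ε' := by
      rw [move_apply_sub, if_pos rfl, if_neg hji']; ring
    rw [e, max_eq_left (by linarith), max_eq_left (by linarith)]
    nlinarith
  · by_cases hp : ∃ p, y p < w p
    · obtain ⟨p, hpw⟩ := hp
      obtain ⟨j, hj, hexj⟩ := hexc w y hwtop hytop p hpw
      refine core p j hpw hj φ (hφ p j) hexj ?_
      intro ε' hε' h1 h2
      have hmo : max (w i - y i) 0 = 0 := max_eq_right (by push_neg at hzi; linarith)
      have hmn : 0 ≤ max ((w - ε' • (chiR p - chiR j)) i - y i) 0 := le_max_right _ _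
      nlinarith
    · push_neg at hp
      have hq : ∃ q, w q < y q := by
        by_contra hq
        push_neg at hq
        exact hwy (funext fun q => le_antisymm (hp q) (hq q))
      obtain ⟨q, hqw⟩ := hq
      obtain ⟨j, hj, -⟩ := hexc y w hytop hwtop q hqw
      exact absurd hj (not_lt.2 (hp j))

set_option maxHeartbeats 1000000 in
/-- If `f'_ℝ(y; i, j) > φ_ℝ(y)` for every `j ≠ i`, and `ŷ = y + λ(χ_h - χ_k)` is obtained
by a long step of length `λ > 0` in a steepest descent direction `+χ_h - χ_k`
(so `f(ŷ) - f(y) = λ φ_ℝ(y)`), then `f'_ℝ(ŷ; i, j) > φ_ℝ(y)` for every `j ≠ i`. -/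
theorem statement18 {n : ℕ} (hn : 1 ≤ n) (f : (Fin n → ℝ) → EReal)
    (hbot : NoBotR f) (hM : PolyMConvex f) (hbdd : BddDomR f)
    (y : Fin n → ℝ) (hy : f y ≠ ⊤) (hphi : phiRp f y < 0)
    (i : Fin n) (hi : ∀ j : Fin n, j ≠ i → phiRp f y < slopeR f y i j)
    (h k : Fin n) (hhk : h ≠ k) (hd : slopeR f y h k = phiRp f y)
    (lam : ℝ) (hlam : 0 < lam)
    (hstep : f (y + lam • (chiR h - chiR k)) - f y = (lam : EReal) * phiRp f y) :
    ∀ j : Fin n, j ≠ i → phiRp f y < slopeR f (y + lam • (chiR h - chiR k)) i j := by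
  classical
  obtain ⟨⟨⟨x₀, t₀, hx₀⟩, m, a, b, c, hrep⟩, hexc⟩ := hM
  set yh := y + lam • (chiR h - chiR k) with hyh
  have hb : ∀ kk, b kk ≤ 0 := bnonpos a b c hrep x₀ t₀ hx₀
  -- y is real valued
  obtain ⟨u, hfyu⟩ : ∃ u : ℝ, f y = (u : EReal) :=
    ⟨(f y).toReal, (EReal.coe_toReal hy (hbot y)).symm⟩
  have hS : (Srep b).Nonempty := Sne_rep a b c hrep y u hfyu
  have hyD : y ∈ Drep a b c := mem_D_of_ne_top a b c hrep y u hfyu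
  set F := Frep a b c hS with hFdef
  have hfF : ∀ x ∈ Drep a b c, f x = ((F x : ℝ) : EReal) := fun x hx =>
    f_eq_F a b c hrep hb hS hbot x hx
  have hfy : f y = ((F y : ℝ) : EReal) := hfF y hyD
  -- phi is a real number
  have hΦtop : phiRp f y ≠ ⊤ := ne_top_of_lt hphi
  have hΦbot : phiRp f y ≠ ⊥ := by
    intro hB
    rw [hB, EReal.mul_bot_of_pos (by exact_mod_cast hlam)] at hstep
    rcases eq_or_ne (f yh) ⊤ with htop | htop
    · rw [htop, hfy, EReal.top_sub_coe] at hstep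
      exact (by simp : (⊤ : EReal) ≠ ⊥) hstep
    · obtain ⟨v, hv⟩ : ∃ v : ℝ, f yh = (v : EReal) :=
        ⟨(f yh).toReal, (EReal.coe_toReal htop (hbot yh)).symm⟩
      rw [hv, hfy, ← EReal.coe_sub] at hstep
      exact (EReal.coe_ne_bot _) hstep
  set φ : ℝ := (phiRp f y).toReal with hφdef
  have hφE : phiRp f y = (φ : EReal) := (EReal.coe_toReal hΦtop hΦbot).symm
  have hφneg : φ < 0 := by
    rw [hφE] at hphi
    exact_mod_cast hphi
  -- f yh is real
  have hyhtop : f yh ≠ ⊤ := by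
    intro htop
    rw [htop, hfy, EReal.top_sub_coe, hφE, ← EReal.coe_mul] at hstep
    exact (EReal.coe_ne_top _) hstep.symm
  have hyhD : yh ∈ Drep a b c := mem_D_of_ne_top a b c hrep yh ((f yh).toReal)
    (EReal.coe_toReal hyhtop (hbot yh)).symm
  have hfyh : f yh = ((F yh : ℝ) : EReal) := hfF yh hyhD
  have hval : F yh = F y + lam * φ := by
    rw [hfyh, hfy, ← EReal.coe_sub, hφE, ← EReal.coe_mul, EReal.coe_eq_coe_iff] at hstep
    linarith
  -- i ≠ h
  have hih : i ≠ h := by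
    intro hih
    subst hih
    have hki : k ≠ i := fun hh => hhk hh.symm
    have := hi k hki
    rw [hd] at this
    exact lt_irrefl _ this
  -- choose δ
  have hne : (Finset.univ.erase i).Nonempty := by
    refine ⟨if i = h then k else h, Finset.mem_erase.2 ⟨?_, Finset.mem_univ _⟩⟩
    split
    · rename_i hih'; exact absurd hih' hih
    · rename_i hih'; exact Ne.symm hih'
  have hm0 : phiRp f y < (Finset.univ.erase i).inf' hne (fun j => slopeR f y i j) := by
    rw [Finset.lt_inf'_iff]
    intro j hjmem
    exact hi j (Finset.mem_erase.1 hjmem).1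
  obtain ⟨r, hr1, hr2⟩ := EReal.lt_iff_exists_real_btwn.1 hm0
  set δ : ℝ := r - φ with hδdef
  have hδpos : 0 < δ := by
    rw [hφE] at hr1
    have : φ < r := by exact_mod_cast hr1
    linarith
  have hφδ : ∀ j : Fin n, j ≠ i → ((φ + δ : ℝ) : EReal) ≤ slopeR f y i j := by
    intro j hj
    have : ((φ + δ : ℝ) : EReal) = (r : EReal) := by norm_num [hδdef]
    rw [this]
    refine le_trans (le_of_lt hr2) ?_
    exact Finset.inf'_le _ (Finset.mem_erase.2 ⟨hj, Finset.mem_univ _⟩)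
  have hφall : ∀ p q : Fin n, (φ : EReal) ≤ slopeR f y p q := by
    intro p q
    rw [← hφE]
    exact le_trans (iInf_le _ p) (iInf_le _ q)
  -- bounded domain for D
  obtain ⟨C, hC⟩ := hbdd
  have hCD : ∀ x ∈ Drep a b c, ∀ q, |x q| ≤ C := by
    intro x hx q
    refine hC x ?_ q
    rw [hfF x hx]
    exact EReal.coe_ne_top _
  have hkey := keyLB a b c hrep hbot hexc hb hS (by omega : 0 < n) C hCD y hyD i φ δ
    hδpos hφall hφδ
  -- main argument
  set η : ℝ := (min δ (-φ)) / 2 with hηdef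
  have hηpos : 0 < η := by
    have : 0 < min δ (-φ) := lt_min hδpos (by linarith)
    positivity
  have hηδ : η < δ := by
    have h1 : min δ (-φ) ≤ δ := min_le_left _ _
    rw [hηdef]; linarith
  have hηφ : η < -φ := by
    have h1 : min δ (-φ) ≤ -φ := min_le_right _ _
    rw [hηdef]; linarith
  intro j hj
  by_contra hcon
  push_neg at hcon
  rw [hφE] at hcon
  -- find small ε with good upper bound
  have hlt : slopeR f yh i j < ((φ + η : ℝ) : EReal) :=
    lt_of_le_of_lt hcon (by exact_mod_cast (by linarith : φ < φ + η))
  rw [slopeR, iInf_lt_iff] at hlt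
  obtain ⟨⟨α₀, hα₀⟩, hq⟩ := hlt
  have hqtop : f (yh + α₀ • (chiR i - chiR j)) ≠ ⊤ := by
    intro htop
    rw [htop, hfyh, EReal.top_sub_coe,
      EReal.top_mul_of_pos (by exact_mod_cast inv_pos.2 hα₀ : (0:EReal) < ((α₀⁻¹ : ℝ) : EReal))] at hq
    exact (not_lt.2 le_top) hq
  obtain ⟨v₁, hv₁⟩ : ∃ v : ℝ, f (yh + α₀ • (chiR i - chiR j)) = (v : EReal) :=
    ⟨_, (EReal.coe_toReal hqtop (hbot _)).symm⟩
  rw [hv₁, hfyh, ← EReal.coe_sub, ← EReal.coe_mul, EReal.coe_lt_coe_iff] at hq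
  have hv₁lt : v₁ < F yh + α₀ * (φ + η) := by
    have h2 : (v₁ - F yh) * α₀⁻¹ * α₀ < (φ + η) * α₀ :=
      mul_lt_mul_of_pos_right hq hα₀
    rw [mul_assoc, inv_mul_cancel₀ (ne_of_gt hα₀), mul_one] at h2
    nlinarith
  set ε : ℝ := min α₀ (lam / 2) with hεdef
  have hεpos : 0 < ε := lt_min hα₀ (by linarith)
  have hεlam : ε < lam := lt_of_le_of_lt (min_le_right _ _) (by linarith)
  have hεα : ε ≤ α₀ := min_le_left _ _
  set θ : ℝ := ε / α₀ with hθdef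
  have hθ0 : 0 ≤ θ := le_of_lt (div_pos hεpos hα₀)
  have hθ1 : θ ≤ 1 := by
    rw [hθdef, div_le_one hα₀]; exact hεα
  have hpt : θ • (yh + α₀ • (chiR i - chiR j)) + (1 - θ) • yh
      = yh + ε • (chiR i - chiR j) := by
    funext q
    simp only [Pi.add_apply, Pi.smul_apply, smul_eq_mul, Pi.sub_apply, chiR]
    have hθα' : θ * α₀ = ε := by
      rw [hθdef, div_mul_cancel₀ _ (ne_of_gt hα₀)]
    linear_combination ((if q = i then (1:ℝ) else 0) - if q = j then 1 else 0) * hθα'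
  have hconv := fconvex f a b c hrep (yh + α₀ • (chiR i - chiR j)) yh v₁ (F yh) θ
    (le_of_eq hv₁) (le_of_eq hfyh) hθ0 hθ1
  rw [hpt] at hconv
  set x : Fin n → ℝ := yh + ε • (chiR i - chiR j) with hxdef
  have hxub : f x ≤ ((F y + lam * φ + ε * (φ + η) : ℝ) : EReal) := by
    refine le_trans hconv ?_
    rw [EReal.coe_le_coe_iff]
    have hθα : θ * α₀ = ε := by rw [hθdef, div_mul_cancel₀ _ (ne_of_gt hα₀)]
    have h3 : θ * v₁ ≤ θ * (F yh + α₀ * (φ + η)) :=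
      mul_le_mul_of_nonneg_left (le_of_lt hv₁lt) hθ0
    have h4 : θ * v₁ + (1 - θ) * F yh ≤ F yh + ε * (φ + η) := by nlinarith
    rw [hval] at h4
    nlinarith [h4, hval]
  have hxtop : f x ≠ ⊤ := fun ht => by
    rw [ht] at hxub; exact (not_le.2 (EReal.coe_lt_top _)) hxub
  have hxD : x ∈ Drep a b c := mem_D_of_ne_top a b c hrep x ((f x).toReal)
    (EReal.coe_toReal hxtop (hbot x)).symm
  have hFx : F x ≤ F y + lam * φ + ε * (φ + η) := by
    rw [hfF x hxD, EReal.coe_le_coe_iff] at hxub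
    exact hxub
  have hkx := hkey x hxD
  -- coordinate formula for x - y
  have hxy : ∀ q, x q - y q
      = lam * ((if q = h then (1:ℝ) else 0) - (if q = k then (1:ℝ) else 0))
        + ε * ((if q = i then (1:ℝ) else 0) - (if q = j then (1:ℝ) else 0)) := by
    intro q
    rw [hxdef, move_apply, hyh, move_apply]
    ring
  have hji : j ≠ i := hj
  have hij : i ≠ j := fun hh => hj hh.symm
  rw [← hFdef] at hkx
  by_cases hik : i = k
  · subst hik
    by_cases hjh : j = h
    · subst hjh
      -- now yh = y + lam • (chiR j - chiR i); support of x - y is {j, i}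
      have e1 : x j - y j = lam - ε := by
        rw [hxy j]; simp [hj]; try ring
      have e2 : x i - y i = ε - lam := by
        rw [hxy i]; simp [hij]; try ring
      have hzero : ∀ t, t ≠ j → t ≠ i → x t - y t = 0 := by
        intro t h1 h2; rw [hxy t]; simp [h1, h2]
      have hs : ∑ q, |x q - y q| = |x j - y j| + |x i - y i| :=
        sum_abs_support2 j i hj (fun q => x q - y q) hzero
      have hsum : ∑ q, |x q - y q| = 2 * (lam - ε) := by
        rw [hs, e1, e2, abs_of_nonneg (by linarith : (0:ℝ) ≤ lam - ε),
          abs_of_nonpos (by linarith : ε - lam ≤ 0)]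
        ring
      rw [hsum, e2, max_eq_right (by linarith : ε - lam ≤ 0)] at hkx
      nlinarith [hkx, hFx]
    · -- support {h, i, j}
      have hhj : h ≠ j := fun hh => hjh hh.symm
      have e1 : x h - y h = lam := by
        rw [hxy h]; simp [Ne.symm hih, hhj]
      have e2 : x i - y i = ε - lam := by
        rw [hxy i]; simp [hih, hij]; try ring
      have e3 : x j - y j = -ε := by
        rw [hxy j]; simp [hjh, hj]
      have hzero : ∀ t, t ≠ h → t ≠ i → t ≠ j → x t - y t = 0 := by
        intro t h1 h2 h3; rw [hxy t]; simp [h1, h2, h3]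
      have hs : ∑ q, |x q - y q| = |x h - y h| + |x i - y i| + |x j - y j| :=
        sum_abs_support3 h i j (Ne.symm hih) hhj hij (fun q => x q - y q) hzero
      have hsum : ∑ q, |x q - y q| = 2 * lam := by
        rw [hs, e1, e2, e3, abs_of_nonneg (by linarith : (0:ℝ) ≤ lam),
          abs_of_nonpos (by linarith : ε - lam ≤ 0),
          abs_of_nonpos (by linarith : -ε ≤ 0)]
        ring
      rw [hsum, e2, max_eq_right (by linarith : ε - lam ≤ 0)] at hkx
      nlinarith [hkx, hFx]
  · -- i ∉ {h, k}
    have e2 : x i - y i = ε := by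
      rw [hxy i]; simp [hih, hik, hij]
    by_cases hjh : j = h
    · subst hjh
      -- support {j, i, k}
      have e1 : x j - y j = lam - ε := by
        rw [hxy j]; simp [hhk, hj]; try ring
      have e3 : x k - y k = -lam := by
        rw [hxy k]; simp [Ne.symm hhk, Ne.symm hik, Ne.symm hij]
      have hzero : ∀ t, t ≠ j → t ≠ i → t ≠ k → x t - y t = 0 := by
        intro t h1 h2 h3; rw [hxy t]; simp [h1, h2, h3]
      have hs : ∑ q, |x q - y q| = |x j - y j| + |x i - y i| + |x k - y k| :=
        sum_abs_support3 j i k hj hhk hik (fun q => x q - y q) hzero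
      have hsum : ∑ q, |x q - y q| = 2 * lam := by
        rw [hs, e1, e2, e3, abs_of_nonneg (by linarith : (0:ℝ) ≤ lam - ε),
          abs_of_nonneg (by linarith : (0:ℝ) ≤ ε),
          abs_of_nonpos (by linarith : -lam ≤ 0)]
        ring
      rw [hsum, e2, max_eq_left (by linarith : (0:ℝ) ≤ ε)] at hkx
      nlinarith [hkx, hFx, mul_pos hεpos (by linarith : (0:ℝ) < δ - φ - η)]
    · have hhj : h ≠ j := fun hh => hjh hh.symm
      by_cases hjk : j = k
      · subst hjk
        -- support {h, i, j}
        have e1 : x h - y h = lam := by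
          rw [hxy h]; simp [Ne.symm hih, hhk]
        have e3 : x j - y j = -lam - ε := by
          rw [hxy j]; simp [hjh, hj]; try ring
        have hzero : ∀ t, t ≠ h → t ≠ i → t ≠ j → x t - y t = 0 := by
          intro t h1 h2 h3; rw [hxy t]; simp [h1, h2, h3]
        have hs : ∑ q, |x q - y q| = |x h - y h| + |x i - y i| + |x j - y j| :=
          sum_abs_support3 h i j (Ne.symm hih) hhk hij (fun q => x q - y q) hzero
        have hsum : ∑ q, |x q - y q| = 2 * (lam + ε) := by
          rw [hs, e1, e2, e3, abs_of_nonneg (by linarith : (0:ℝ) ≤ lam),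
            abs_of_nonneg (by linarith : (0:ℝ) ≤ ε),
            abs_of_nonpos (by linarith : -lam - ε ≤ 0)]
          ring
        rw [hsum, e2, max_eq_left (by linarith : (0:ℝ) ≤ ε)] at hkx
        nlinarith [hkx, hFx, mul_pos hεpos (by linarith : (0:ℝ) < δ - η)]
      · have hkj : k ≠ j := fun hh => hjk hh.symm
        -- support {h, i, k, j}
        have e1 : x h - y h = lam := by
          rw [hxy h]; simp [Ne.symm hih, hhk, hhj]
        have e3 : x k - y k = -lam := by
          rw [hxy k]; simp [Ne.symm hhk, Ne.symm hik, hkj]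
        have e4 : x j - y j = -ε := by
          rw [hxy j]; simp [hjh, hj, hjk]
        have hzero : ∀ t, t ≠ h → t ≠ i → t ≠ k → t ≠ j → x t - y t = 0 := by
          intro t h1 h2 h3 h4; rw [hxy t]; simp [h1, h2, h3, h4]
        have hs : ∑ q, |x q - y q| = |x h - y h| + |x i - y i| + |x k - y k| + |x j - y j| :=
          sum_abs_support4 h i k j (Ne.symm hih) hhk hhj hik hij hkj
            (fun q => x q - y q) hzero
        have hsum : ∑ q, |x q - y q| = 2 * (lam + ε) := by
          rw [hs, e1, e2, e3, e4, abs_of_nonneg (by linarith : (0:ℝ) ≤ lam),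
            abs_of_nonneg (by linarith : (0:ℝ) ≤ ε),
            abs_of_nonpos (by linarith : -lam ≤ 0),
            abs_of_nonpos (by linarith : -ε ≤ 0)]
          ring
        rw [hsum, e2, max_eq_left (by linarith : (0:ℝ) ≤ ε)] at hkx
        nlinarith [hkx, hFx, mul_pos hεpos (by linarith : (0:ℝ) < δ - η)]
end
end

section
/- Let f : ℤ^n → ℝ ∪ {+∞} be an M-convex function with bounded dom f (so argmin f ≠ ∅), and define τ(y) = min{‖z − y‖₁ : z ∈ argmin f} for y ∈ dom f. Let x ∈ dom f with φ(x) < 0, and suppose i, j ∈ N minimize f'(x; i, j) over all pairs (i, j) ∈ N × N. Then τ(x + χ_i − χ_j) = τ(x) − 2; consequently, starting from x_0 ∈ dom f, the steepest descent algorithm that repeatedly replaces x by x + χ_i − χ_j for a steepest descent direction reaches a minimizer x* with ‖x* − x_0‖₁ = τ(x_0) after exactly (1/2)τ(x_0) iterations. -/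
noncomputable section

open scoped BigOperators

/-- The `i`-th unit vector in `ℤ^n`. -/
def chi {n : ℕ} (i : Fin n) : Fin n → ℤ := fun k => if k = i then 1 else 0

/-- The function never takes the value `-∞`, i.e. its codomain is `ℝ ∪ {+∞}`. -/
def NoBot {n : ℕ} (f : (Fin n → ℤ) → EReal) : Prop := ∀ x, f x ≠ ⊥

/-- M-convexity: nonempty effective domain together with the exchange axiom (M-EXC). -/
def MConvexFn {n : ℕ} (f : (Fin n → ℤ) → EReal) : Prop :=
  (∃ x, f x ≠ ⊤) ∧
  ∀ x y : Fin n → ℤ, f x ≠ ⊤ → f y ≠ ⊤ →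
    ∀ i : Fin n, y i < x i →
      ∃ j : Fin n, x j < y j ∧
        f (x - chi i + chi j) + f (y + chi i - chi j) ≤ f x + f y

/-- The slopeZ `f'(x; i, j) = f(x + χ_i - χ_j) - f(x)`. -/
def slopeZ {n : ℕ} (f : (Fin n → ℤ) → EReal) (x : Fin n → ℤ) (i j : Fin n) : EReal :=
  f (x + chi i - chi j) - f x

/-- `φ(x) = min_{i, j ∈ N} f'(x; i, j)`. -/
def phi {n : ℕ} (f : (Fin n → ℤ) → EReal) (x : Fin n → ℤ) : EReal :=
  ⨅ i : Fin n, ⨅ j : Fin n, slopeZ f x i j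

/-- Bounded effective domain. -/
def BddDom {n : ℕ} (f : (Fin n → ℤ) → EReal) : Prop :=
  ∃ C : ℤ, ∀ x : Fin n → ℤ, f x ≠ ⊤ → ∀ i, |x i| ≤ C

/-- `‖x‖₁`. -/
def norm1 {n : ℕ} (x : Fin n → ℤ) : ℤ := ∑ i, |x i|

/-- `z` is a global minimizer of `f`. -/
def IsArgmin {n : ℕ} (f : (Fin n → ℤ) → EReal) (z : Fin n → ℤ) : Prop :=
  f z ≠ ⊤ ∧ ∀ y : Fin n → ℤ, f z ≤ f y

/-- `τ(y) = min { ‖z - y‖₁ : z ∈ argmin f }`. -/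
def tau {n : ℕ} (f : (Fin n → ℤ) → EReal) (y : Fin n → ℤ) : ℤ :=
  sInf {d : ℤ | ∃ z : Fin n → ℤ, IsArgmin f z ∧ norm1 (z - y) = d}


namespace SD19

variable {n : ℕ} {f : (Fin n → ℤ) → EReal}

/-! ### Basic facts about `chi` and `norm1` -/

lemma abs_add_one (t : ℤ) : |t + 1| = |t| + (if 0 ≤ t then 1 else -1) := by
  rcases le_or_gt 0 t with h | h
  · rw [if_pos h, abs_of_nonneg h, abs_of_nonneg (by omega)]
  · rw [if_neg (by omega), abs_of_neg h, abs_of_nonpos (by omega)]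
    ring

lemma abs_sub_one (t : ℤ) : |t - 1| = |t| + (if t ≤ 0 then 1 else -1) := by
  rcases le_or_gt t 0 with h | h
  · rw [if_pos h, abs_of_nonpos h, abs_of_nonpos (by omega)]
    ring
  · rw [if_neg (by omega), abs_of_pos h, abs_of_nonneg (by omega)]
    ring

lemma norm1_nonneg (x : Fin n → ℤ) : 0 ≤ norm1 x :=
  Finset.sum_nonneg fun c _ => abs_nonneg _

lemma norm1_zero : norm1 (0 : Fin n → ℤ) = 0 := by simp [norm1]

lemma eq_of_norm1_sub_eq_zero {z y : Fin n → ℤ} (h : norm1 (z - y) = 0) : z = y := by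
  have h0 := (Finset.sum_eq_zero_iff_of_nonneg
    (fun c (_ : c ∈ Finset.univ) => abs_nonneg ((z - y) c))).mp h
  funext c
  have h1 : |(z - y) c| = 0 := h0 c (Finset.mem_univ c)
  have h2 : z c - y c = 0 := by
    have := abs_eq_zero.mp h1
    simpa using this
  omega

lemma norm1_update (w : Fin n → ℤ) {a b : Fin n} (hab : a ≠ b) :
    norm1 (w + chi a - chi b)
      = norm1 w + (if 0 ≤ w a then 1 else -1) + (if w b ≤ 0 then 1 else -1) := by
  classical
  have hpt : ∀ c, |(w + chi a - chi b) c|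
      = |w c| + ((if c = a then (if 0 ≤ w a then (1:ℤ) else -1) else 0)
               + (if c = b then (if w b ≤ 0 then (1:ℤ) else -1) else 0)) := by
    intro c
    have hc : (w + chi a - chi b) c
        = w c + (if c = a then 1 else 0) - (if c = b then 1 else 0) := by
      simp [chi]
    by_cases hca : c = a
    · rw [hc]
      simp only [hca, if_pos rfl, if_neg hab, sub_zero, add_zero]
      exact abs_add_one (w a)
    · by_cases hcb : c = b
      · rw [hc]
        simp only [hcb, if_pos rfl, if_neg (Ne.symm hab), zero_add, add_zero]
        exact abs_sub_one (w b)
      · rw [hc]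
        simp only [if_neg hca, if_neg hcb, sub_zero, add_zero, zero_add]
  unfold norm1
  rw [Finset.sum_congr rfl (fun c _ => hpt c), Finset.sum_add_distrib, Finset.sum_add_distrib,
    Finset.sum_ite_eq' Finset.univ a, Finset.sum_ite_eq' Finset.univ b,
    if_pos (Finset.mem_univ a), if_pos (Finset.mem_univ b)]
  ring

lemma dist_step (z x : Fin n → ℤ) {a b : Fin n} (hab : a ≠ b) :
    norm1 (z + chi a - chi b - x) = norm1 (z - x)
      + (if 0 ≤ z a - x a then 1 else -1) + (if z b - x b ≤ 0 then 1 else -1) := by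
  have e : z + chi a - chi b - x = (z - x) + chi a - chi b := by abel
  rw [e, norm1_update (z - x) hab]
  simp only [Pi.sub_apply]

lemma dist_two (z x : Fin n → ℤ) {i j : Fin n} (hij : i ≠ j) :
    norm1 (z - (x + chi i - chi j)) = norm1 (z - x)
      + (if 0 ≤ z j - x j then 1 else -1) + (if z i - x i ≤ 0 then 1 else -1) := by
  have e : z - (x + chi i - chi j) = (z - x) + chi j - chi i := by abel
  rw [e, norm1_update (z - x) (Ne.symm hij)]
  simp only [Pi.sub_apply]

lemma sum_chi (i : Fin n) : ∑ c, chi i c = 1 := by simp [chi]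

lemma sum_exch (u : Fin n → ℤ) (a b : Fin n) :
    ∑ c, (u - chi a + chi b) c = ∑ c, u c := by
  simp only [Pi.add_apply, Pi.sub_apply]
  rw [Finset.sum_add_distrib, Finset.sum_sub_distrib, sum_chi, sum_chi]
  ring

/-! ### EReal/toReal transfer -/

lemma coeF (hbot : NoBot f) {v : Fin n → ℤ} (h : f v ≠ ⊤) : ((f v).toReal : EReal) = f v :=
  EReal.coe_toReal h (hbot v)

lemma argmin_le (hbot : NoBot f) {z w : Fin n → ℤ} (hz : IsArgmin f z) (hw : f w ≠ ⊤) :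
    (f z).toReal ≤ (f w).toReal := by
  have h := hz.2 w
  rw [← coeF hbot hz.1, ← coeF hbot hw, EReal.coe_le_coe_iff] at h
  exact h

lemma isArgmin_of (hbot : NoBot f) {z : Fin n → ℤ} (hz : f z ≠ ⊤)
    (h : ∀ w, f w ≠ ⊤ → (f z).toReal ≤ (f w).toReal) : IsArgmin f z := by
  refine ⟨hz, fun w => ?_⟩
  by_cases hw : f w = ⊤
  · rw [hw]; exact le_top
  · rw [← coeF hbot hz, ← coeF hbot hw, EReal.coe_le_coe_iff]
    exact h w hw

lemma exch (hbot : NoBot f) (hM : MConvexFn f) {u v : Fin n → ℤ}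
    (hu : f u ≠ ⊤) (hv : f v ≠ ⊤) {c : Fin n} (h : v c < u c) :
    ∃ k, u k < v k ∧ f (u - chi c + chi k) ≠ ⊤ ∧ f (v + chi c - chi k) ≠ ⊤ ∧
      (f (u - chi c + chi k)).toReal + (f (v + chi c - chi k)).toReal
        ≤ (f u).toReal + (f v).toReal := by
  obtain ⟨k, hk, hineq⟩ := hM.2 u v hu hv c h
  have hsum_ne : f u + f v ≠ ⊤ := by
    rw [← coeF hbot hu, ← coeF hbot hv, ← EReal.coe_add]
    exact EReal.coe_ne_top _
  have h1 : f (u - chi c + chi k) ≠ ⊤ := by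
    intro htop
    rw [htop, EReal.top_add_of_ne_bot (hbot _)] at hineq
    exact hsum_ne (top_le_iff.mp hineq)
  have h2 : f (v + chi c - chi k) ≠ ⊤ := by
    intro htop
    rw [htop, EReal.add_top_of_ne_bot (hbot _)] at hineq
    exact hsum_ne (top_le_iff.mp hineq)
  refine ⟨k, hk, h1, h2, ?_⟩
  rw [← coeF hbot h1, ← coeF hbot h2, ← coeF hbot hu, ← coeF hbot hv,
    ← EReal.coe_add, ← EReal.coe_add, EReal.coe_le_coe_iff] at hineq
  exact hineq

lemma slope_neg_dom (hbot : NoBot f) {x : Fin n → ℤ} (hx : f x ≠ ⊤) {i j : Fin n}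
    (h : slopeZ f x i j < 0) :
    f (x + chi i - chi j) ≠ ⊤ ∧ (f (x + chi i - chi j)).toReal < (f x).toReal := by
  unfold slopeZ at h
  by_cases htop : f (x + chi i - chi j) = ⊤
  · rw [htop, ← coeF hbot hx, EReal.top_sub_coe] at h
    exact (not_top_lt h).elim
  · refine ⟨htop, ?_⟩
    rw [← coeF hbot htop, ← coeF hbot hx, ← EReal.coe_sub] at h
    have h2 : (f (x + chi i - chi j)).toReal - (f x).toReal < 0 := by exact_mod_cast h
    linarith

lemma slope_ne_of_neg (hbot : NoBot f) {x : Fin n → ℤ} (hx : f x ≠ ⊤) {i j : Fin n}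
    (h : slopeZ f x i j < 0) : i ≠ j := by
  intro e
  subst e
  unfold slopeZ at h
  rw [show x + chi i - chi i = x by abel, ← coeF hbot hx, ← EReal.coe_sub] at h
  have h2 : (f x).toReal - (f x).toReal < 0 := by exact_mod_cast h
  linarith

lemma steep_le (hbot : NoBot f) {x : Fin n → ℤ} (hx : f x ≠ ⊤) {i j : Fin n}
    (hsteep : ∀ a b, slopeZ f x i j ≤ slopeZ f x a b)
    (hx' : f (x + chi i - chi j) ≠ ⊤) {a b : Fin n} (hq : f (x + chi a - chi b) ≠ ⊤) :
    (f (x + chi i - chi j)).toReal ≤ (f (x + chi a - chi b)).toReal := by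
  have h := hsteep a b
  unfold slopeZ at h
  rw [← coeF hbot hx, ← coeF hbot hx', ← coeF hbot hq, ← EReal.coe_sub, ← EReal.coe_sub,
    EReal.coe_le_coe_iff] at h
  linarith

lemma slope_le_phi {x : Fin n → ℤ} {i j : Fin n}
    (h : ∀ a b, slopeZ f x i j ≤ slopeZ f x a b) : slopeZ f x i j ≤ phi f x := by
  unfold phi
  exact le_iInf fun a => le_iInf fun b => h a b

/-! ### Existence of a global minimizer -/

lemma exists_argmin (hbot : NoBot f) (hM : MConvexFn f) (hbdd : BddDom f) :
    ∃ z, IsArgmin f z := by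
  classical
  obtain ⟨C, hC⟩ := hbdd
  obtain ⟨x0, hx0⟩ := hM.1
  set s : Finset (Fin n → ℤ) :=
    (Finset.Icc (fun _ => -C) (fun _ => C)).filter (fun v => f v ≠ ⊤) with hs
  have hmem : ∀ v, f v ≠ ⊤ → v ∈ s := by
    intro v hv
    rw [hs, Finset.mem_filter, Finset.mem_Icc]
    refine ⟨⟨?_, ?_⟩, hv⟩
    · intro c
      have := hC v hv c
      have := abs_le.mp this
      exact this.1
    · intro c
      have := hC v hv c
      have := abs_le.mp this
      exact this.2
  obtain ⟨z, hzs, hzmin⟩ := Finset.exists_min_image s f ⟨x0, hmem x0 hx0⟩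
  refine ⟨z, (Finset.mem_filter.mp hzs).2, fun w => ?_⟩
  by_cases hw : f w = ⊤
  · rw [hw]; exact le_top
  · exact hzmin w (hmem w hw)

/-! ### tau facts -/

lemma tau_le {z y : Fin n → ℤ} (hz : IsArgmin f z) : tau f y ≤ norm1 (z - y) := by
  unfold tau
  exact csInf_le ⟨0, by rintro d ⟨z', _, rfl⟩; exact norm1_nonneg _⟩ ⟨z, hz, rfl⟩

lemma le_tau (hne : ∃ z, IsArgmin f z) {y : Fin n → ℤ} {m : ℤ}
    (h : ∀ z, IsArgmin f z → m ≤ norm1 (z - y)) : m ≤ tau f y := by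
  obtain ⟨z0, hz0⟩ := hne
  unfold tau
  exact le_csInf ⟨_, z0, hz0, rfl⟩ (by rintro d ⟨z, hz, rfl⟩; exact h z hz)

lemma exists_tau (hne : ∃ z, IsArgmin f z) (y : Fin n → ℤ) :
    ∃ z, IsArgmin f z ∧ norm1 (z - y) = tau f y := by
  obtain ⟨z0, hz0⟩ := hne
  have hmem := Int.csInf_mem (s := {d : ℤ | ∃ z, IsArgmin f z ∧ norm1 (z - y) = d})
    ⟨_, z0, hz0, rfl⟩ ⟨0, by rintro d ⟨z', _, rfl⟩; exact norm1_nonneg _⟩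
  obtain ⟨z, hz, hd⟩ := hmem
  exact ⟨z, hz, hd⟩

/-! ### Constant sum on the effective domain, parity -/

lemma sum_eq (hbot : NoBot f) (hM : MConvexFn f) :
    ∀ u v : Fin n → ℤ, f u ≠ ⊤ → f v ≠ ⊤ → ∑ c, u c = ∑ c, v c := by
  suffices key : ∀ N : ℕ, ∀ u v : Fin n → ℤ, f u ≠ ⊤ → f v ≠ ⊤ →
      norm1 (u - v) ≤ N → ∑ c, u c = ∑ c, v c by
    intro u v hu hv
    exact key (norm1 (u - v)).toNat u v hu hv
      (le_of_eq (Int.toNat_of_nonneg (norm1_nonneg _)).symm)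
  intro N
  induction N with
  | zero =>
    intro u v hu hv h
    have : u = v := eq_of_norm1_sub_eq_zero
      (le_antisymm (by exact_mod_cast h) (norm1_nonneg _))
    rw [this]
  | succ N ih =>
    intro u v hu hv h
    by_cases huv : u = v
    · rw [huv]
    · obtain ⟨c, hc⟩ := Function.ne_iff.mp huv
      rcases lt_or_gt_of_ne hc with hlt | hgt
      · -- u c < v c : exchange on (v, u) at c
        obtain ⟨k, hk, h1, _, _⟩ := exch hbot hM hv hu hlt
        have hkc : k ≠ c := by intro e; subst e; omega
        have hnew : norm1 (u - (v - chi c + chi k)) = norm1 (u - v) - 2 := by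
          have e : u - (v - chi c + chi k) = (u - v) + chi c - chi k := by abel
          rw [e, norm1_update (u - v) (Ne.symm hkc),
            if_neg (show ¬ 0 ≤ (u - v) c by simp only [Pi.sub_apply]; omega),
            if_neg (show ¬ (u - v) k ≤ 0 by simp only [Pi.sub_apply]; omega)]
          ring
        have hres := ih u (v - chi c + chi k) hu h1 (by push_cast at h ⊢; omega)
        rw [hres, sum_exch]
      · -- v c < u c : exchange on (u, v) at c
        obtain ⟨k, hk, h1, _, _⟩ := exch hbot hM hu hv hgt
        have hkc : k ≠ c := by intro e; subst e; omega
        have hnew : norm1 (u - chi c + chi k - v) = norm1 (u - v) - 2 := by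
          have e : u - chi c + chi k - v = (u - v) + chi k - chi c := by abel
          rw [e, norm1_update (u - v) hkc,
            if_neg (show ¬ 0 ≤ (u - v) k by simp only [Pi.sub_apply]; omega),
            if_neg (show ¬ (u - v) c ≤ 0 by simp only [Pi.sub_apply]; omega)]
          ring
        have hres := ih (u - chi c + chi k) v h1 hv (by push_cast at h ⊢; omega)
        rw [← hres, sum_exch]

lemma even_norm1 (hbot : NoBot f) (hM : MConvexFn f) {u v : Fin n → ℤ}
    (hu : f u ≠ ⊤) (hv : f v ≠ ⊤) : Even (norm1 (u - v)) := by
  have hsum : ∑ c, (u - v) c = 0 := by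
    simp only [Pi.sub_apply]
    rw [Finset.sum_sub_distrib, sum_eq hbot hM u v hu hv, sub_self]
  have key : norm1 (u - v) = 2 * (∑ c, (if 0 ≤ (u - v) c then 0 else -((u - v) c)))
      + ∑ c, (u - v) c := by
    unfold norm1
    rw [Finset.mul_sum, ← Finset.sum_add_distrib]
    refine Finset.sum_congr rfl fun c _ => ?_
    rcases le_or_gt 0 ((u - v) c) with h | h
    · rw [if_pos h, abs_of_nonneg h]; ring
    · rw [if_neg (by omega), abs_of_neg h]; ring
  rw [key, hsum, add_zero]
  exact ⟨_, by ring⟩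

/-! ### Local optimality implies global optimality -/

lemma argmin_of_phi_nonneg (hbot : NoBot f) (hM : MConvexFn f)
    {x : Fin n → ℤ} (hx : f x ≠ ⊤) (h : 0 ≤ phi f x) : IsArgmin f x := by
  unfold phi at h
  have hslope : ∀ a b : Fin n, f (x + chi a - chi b) ≠ ⊤ →
      (f x).toReal ≤ (f (x + chi a - chi b)).toReal := by
    intro a b hq
    have h2 : (0:EReal) ≤ slopeZ f x a b := le_trans h (le_trans (iInf_le _ a) (iInf_le _ b))
    unfold slopeZ at h2
    rw [← coeF hbot hq, ← coeF hbot hx, ← EReal.coe_sub] at h2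
    have h3 : (0:ℝ) ≤ (f (x + chi a - chi b)).toReal - (f x).toReal := by exact_mod_cast h2
    linarith
  suffices key : ∀ N : ℕ, ∀ v, f v ≠ ⊤ → norm1 (v - x) ≤ N →
      (f x).toReal ≤ (f v).toReal by
    apply isArgmin_of hbot hx
    intro w hw
    exact key (norm1 (w - x)).toNat w hw
      (le_of_eq (Int.toNat_of_nonneg (norm1_nonneg _)).symm)
  intro N
  induction N with
  | zero =>
    intro v hv h0
    have : v = x := eq_of_norm1_sub_eq_zero
      (le_antisymm (by exact_mod_cast h0) (norm1_nonneg _))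
    rw [this]
  | succ N ih =>
    intro v hv hN
    by_cases hvx : v = x
    · rw [hvx]
    · have hsumeq : ∑ c, v c = ∑ c, x c := sum_eq hbot hM v x hv hx
      have hex : ∃ c, x c < v c := by
        by_contra hno
        push_neg at hno
        obtain ⟨c0, hc0⟩ := Function.ne_iff.mp hvx
        have : ∑ c, v c < ∑ c, x c :=
          Finset.sum_lt_sum (fun c _ => hno c) ⟨c0, Finset.mem_univ c0,
            lt_of_le_of_ne (hno c0) hc0⟩
        omega
      obtain ⟨c, hc⟩ := hex
      obtain ⟨k, hk, h1, h2, hineq⟩ := exch hbot hM hv hx hc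
      have hle : (f (v - chi c + chi k)).toReal ≤ (f v).toReal := by
        have := hslope c k h2
        linarith
      have hkc : k ≠ c := by intro e; subst e; omega
      have hnew : norm1 (v - chi c + chi k - x) = norm1 (v - x) - 2 := by
        have e : v - chi c + chi k - x = (v - x) + chi k - chi c := by abel
        rw [e, norm1_update (v - x) hkc,
          if_neg (show ¬ 0 ≤ (v - x) k by simp only [Pi.sub_apply]; omega),
          if_neg (show ¬ (v - x) c ≤ 0 by simp only [Pi.sub_apply]; omega)]
        ring
      have := ih (v - chi c + chi k) h1 (by push_cast at hN ⊢; omega)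
      linarith

lemma phi_neg_of_tau_pos (hbot : NoBot f) (hM : MConvexFn f) {x : Fin n → ℤ}
    (hx : f x ≠ ⊤) (h : 0 < tau f x) : phi f x < 0 := by
  by_contra hc
  have harg := argmin_of_phi_nonneg hbot hM hx (not_lt.mp hc)
  have hle := tau_le (y := x) harg
  rw [sub_self, norm1_zero] at hle
  omega

end SD19

namespace SD19

variable {n : ℕ} {f : (Fin n → ℤ) → EReal}

/-- Main lemma: one steepest-descent step decreases τ by exactly 2. -/
lemma step_tau (hbot : NoBot f) (hM : MConvexFn f) (hbdd : BddDom f)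
    {x : Fin n → ℤ} (hx : f x ≠ ⊤) {i j : Fin n}
    (hneg : slopeZ f x i j < 0)
    (hsteep : ∀ a b, slopeZ f x i j ≤ slopeZ f x a b) :
    tau f (x + chi i - chi j) = tau f x - 2 := by
  classical
  have hij : i ≠ j := slope_ne_of_neg hbot hx hneg
  obtain ⟨hx'dom, hlt⟩ := slope_neg_dom hbot hx hneg
  have hexmin : ∃ z, IsArgmin f z := exists_argmin hbot hM hbdd
  have hμle : ∀ z, IsArgmin f z → tau f x ≤ norm1 (z - x) := fun z hz => tau_le hz
  obtain ⟨y₀, hy₀, hy₀d⟩ := exists_tau hexmin x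
  have hx'i : (x + chi i - chi j) i = x i + 1 := by simp [chi, hij]
  have hx'j : (x + chi i - chi j) j = x j - 1 := by simp [chi, Ne.symm hij]
  have hx'o : ∀ k, k ≠ i → k ≠ j → (x + chi i - chi j) k = x k := by
    intro k h1 h2
    simp [chi, h1, h2]
  -- i-side exchange
  have alpha : ∀ z, IsArgmin f z → z i ≤ x i →
      ∃ k, k ≠ i ∧ (x + chi i - chi j) k < z k ∧ IsArgmin f (z + chi i - chi k) := by
    intro z hz hzi
    have hclt : z i < (x + chi i - chi j) i := by rw [hx'i]; omega
    obtain ⟨k, hk, h1, h2, hineq⟩ := exch hbot hM hx'dom hz.1 hclt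
    have e : x + chi i - chi j - chi i + chi k = x + chi k - chi j := by abel
    rw [e] at h1 hineq
    have hki : k ≠ i := by
      intro e'
      subst e'
      omega
    have hge := steep_le hbot hx hsteep hx'dom h1
    refine ⟨k, hki, hk, isArgmin_of hbot h2 (fun w hw => ?_)⟩
    have hzw := argmin_le hbot hz hw
    linarith
  -- j-side exchange
  have beta : ∀ z, IsArgmin f z → x j ≤ z j →
      ∃ k, k ≠ i ∧ k ≠ j ∧ z k < x k ∧ IsArgmin f (z + chi k - chi j) := by
    intro z hz hzj
    have hclt : (x + chi i - chi j) j < z j := by rw [hx'j]; omega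
    obtain ⟨k, hk, h1, h2, hineq⟩ := exch hbot hM hz.1 hx'dom hclt
    have hkj : k ≠ j := by
      intro e'
      subst e'
      omega
    have e0 : z - chi j + chi k = z + chi k - chi j := by abel
    rw [e0] at h1 hineq
    by_cases hki : k = i
    · have e : x + chi i - chi j + chi j - chi k = x := by rw [hki]; abel
      rw [e] at h2 hineq
      have hminle := argmin_le hbot hz h1
      exact ((by linarith : False)).elim
    · have hzk : z k < x k := by rw [hx'o k hki hkj] at hk; exact hk
      have e : x + chi i - chi j + chi j - chi k = x + chi i - chi k := by abel
      rw [e] at h2 hineq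
      have hge := steep_le hbot hx hsteep hx'dom h2
      refine ⟨k, hki, hkj, hzk, isArgmin_of hbot h1 (fun w hw => ?_)⟩
      have hzw := argmin_le hbot hz hw
      linarith
  -- lower bound
  have hlb : tau f x - 2 ≤ tau f (x + chi i - chi j) := by
    apply le_tau hexmin
    intro z hz
    rw [dist_two z x hij]
    have := hμle z hz
    split_ifs <;> omega
  -- main contradiction: ¬ (tau f x ≤ tau f (x'))
  have hmain : ¬ tau f x ≤ tau f (x + chi i - chi j) := by
    intro hPμ
    -- A: no nearest minimizer is aligned
    have clA : ∀ z, IsArgmin f z → norm1 (z - x) = tau f x →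
        x i < z i → z j < x j → False := by
      intro z hz hd hi1 hj1
      have h1 : tau f (x + chi i - chi j) ≤ norm1 (z - (x + chi i - chi j)) := tau_le hz
      rw [dist_two z x hij, hd, if_neg (show ¬ 0 ≤ z j - x j by omega),
        if_neg (show ¬ z i - x i ≤ 0 by omega)] at h1
      omega
    -- B: every nearest minimizer satisfies x j ≤ z j
    have clB : ∀ z, IsArgmin f z → norm1 (z - x) = tau f x → z j < x j → False := by
      intro z hz hd hj1
      have hzi : z i ≤ x i := by
        by_contra hcon
        exact clA z hz hd (by omega) hj1
      obtain ⟨k, hki, hk, hw⟩ := alpha z hz hzi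
      have hkj : k ≠ j := by
        intro e
        subst e
        rw [hx'j] at hk
        omega
      rw [hx'o k hki hkj] at hk
      have hik : i ≠ k := fun e => hki e.symm
      have hd' : norm1 (z + chi i - chi k - x)
          = tau f x + (if 0 ≤ z i - x i then 1 else -1) + (if z k - x k ≤ 0 then 1 else -1) := by
        rw [dist_step z x hik, hd]
      rw [if_neg (show ¬ z k - x k ≤ 0 by omega)] at hd'
      have hle := hμle _ hw
      rcases le_or_gt 0 (z i - x i) with hcase | hcase
      · rw [if_pos hcase] at hd'
        have hco1 : (z + chi i - chi k) i = z i + 1 := by simp [chi, hik]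
        have hco2 : (z + chi i - chi k) j = z j := by simp [chi, Ne.symm hij, Ne.symm hkj]
        exact clA _ hw (by omega) (by omega) (by omega)
      · rw [if_neg (show ¬ 0 ≤ z i - x i by omega)] at hd'
        omega
    -- C: every nearest minimizer satisfies z i ≤ x i
    have clC : ∀ z, IsArgmin f z → norm1 (z - x) = tau f x → x i < z i → False := by
      intro z hz hd hi1
      have hzj : x j ≤ z j := by
        by_contra hcon
        exact clA z hz hd hi1 (by omega)
      obtain ⟨k, hki, hkj, hzk, hw⟩ := beta z hz hzj
      have hd' : norm1 (z + chi k - chi j - x)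
          = tau f x + (if 0 ≤ z k - x k then 1 else -1) + (if z j - x j ≤ 0 then 1 else -1) := by
        rw [dist_step z x hkj, hd]
      rw [if_neg (show ¬ 0 ≤ z k - x k by omega)] at hd'
      have hle := hμle _ hw
      rcases le_or_gt (z j - x j) 0 with hcase | hcase
      · rw [if_pos hcase] at hd'
        have hco : (z + chi k - chi j) j = z j - 1 := by simp [chi, Ne.symm hkj]
        exact clB _ hw (by omega) (by omega)
      · rw [if_neg (show ¬ z j - x j ≤ 0 by omega)] at hd'
        omega
    -- D: every nearest minimizer agrees with x on coordinates i and j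
    have clD : ∀ z, IsArgmin f z → norm1 (z - x) = tau f x → z i = x i ∧ z j = x j := by
      intro z hz hd
      have hzi : z i ≤ x i := by
        by_contra hcon
        exact (clC z hz hd (by omega)).elim
      have hzj : x j ≤ z j := by
        by_contra hcon
        exact (clB z hz hd (by omega)).elim
      obtain ⟨k, hki, hk, hw⟩ := alpha z hz hzi
      have hik : i ≠ k := fun e => hki e.symm
      by_cases hkj : k = j
      · subst hkj
        have hd' : norm1 (z + chi i - chi k - x)
            = tau f x + (if 0 ≤ z i - x i then 1 else -1) + (if z k - x k ≤ 0 then 1 else -1) := by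
          rw [dist_step z x hik, hd]
        have hle := hμle _ hw
        constructor
        · by_contra hne
          have h1 : z i < x i := by omega
          rw [if_neg (show ¬ 0 ≤ z i - x i by omega)] at hd'
          rcases le_or_gt (z k - x k) 0 with hc2 | hc2
          · rw [if_pos hc2] at hd'
            have hco : (z + chi i - chi k) k = z k - 1 := by simp [chi, hki]
            exact clB _ hw (by omega) (by omega)
          · rw [if_neg (show ¬ z k - x k ≤ 0 by omega)] at hd'
            omega
        · by_contra hne
          have h2 : x k < z k := by omega
          rw [if_neg (show ¬ z k - x k ≤ 0 by omega)] at hd'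
          rcases le_or_gt 0 (z i - x i) with hc1 | hc1
          · rw [if_pos hc1] at hd'
            have hco : (z + chi i - chi k) i = z i + 1 := by simp [chi, hik]
            exact (clC _ hw (by omega) (by omega)).elim
          · rw [if_neg (show ¬ 0 ≤ z i - x i by omega)] at hd'
            omega
      · rw [hx'o k hki hkj] at hk
        have hd' : norm1 (z + chi i - chi k - x)
            = tau f x + (if 0 ≤ z i - x i then 1 else -1) + (if z k - x k ≤ 0 then 1 else -1) := by
          rw [dist_step z x hik, hd]
        rw [if_neg (show ¬ z k - x k ≤ 0 by omega)] at hd'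
        have hle := hμle _ hw
        rcases le_or_gt 0 (z i - x i) with hc1 | hc1
        · rw [if_pos hc1] at hd'
          have hco : (z + chi i - chi k) i = z i + 1 := by simp [chi, hik]
          exact (clC _ hw (by omega) (by omega)).elim
        · rw [if_neg (show ¬ 0 ≤ z i - x i by omega)] at hd'
          omega
    -- final contradiction
    obtain ⟨hyi, hyj⟩ := clD y₀ hy₀ hy₀d
    obtain ⟨k, hki, hkj, hyk, hw⟩ := beta y₀ hy₀ (by omega)
    have hd' : norm1 (y₀ + chi k - chi j - x)
        = tau f x + (if 0 ≤ y₀ k - x k then 1 else -1) + (if y₀ j - x j ≤ 0 then 1 else -1) := by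
      rw [dist_step y₀ x hkj, hy₀d]
    rw [if_neg (show ¬ 0 ≤ y₀ k - x k by omega),
      if_pos (show y₀ j - x j ≤ 0 by omega)] at hd'
    have hDj := (clD _ hw (by omega)).2
    have hco : (y₀ + chi k - chi j) j = y₀ j - 1 := by simp [chi, Ne.symm hkj]
    omega
  -- combine: lower bound, strict upper bound, parity
  have hub : tau f (x + chi i - chi j) < tau f x := not_le.mp hmain
  obtain ⟨zs, hzs, hzsd⟩ := exists_tau hexmin (x + chi i - chi j)
  have hevP : Even (tau f (x + chi i - chi j)) := by
    rw [← hzsd]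
    exact even_norm1 hbot hM hzs.1 hx'dom
  have hevμ : Even (tau f x) := by
    rw [← hy₀d]
    exact even_norm1 hbot hM hy₀.1 hx
  obtain ⟨p, hp⟩ := hevP
  obtain ⟨q, hq⟩ := hevμ
  omega

end SD19

/-- One steepest descent step decreases the `ℓ₁`-distance to `argmin f` by exactly 2;
consequently, the steepest descent algorithm started at `x₀` reaches a minimizer `x*`
with `‖x* - x₀‖₁ = τ(x₀)` after exactly `(1/2) τ(x₀)` iterations. -/
theorem statement19 {n : ℕ} (hn : 1 ≤ n) (f : (Fin n → ℤ) → EReal)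
    (hbot : NoBot f) (hM : MConvexFn f) (hbdd : BddDom f) :
    (∀ x : Fin n → ℤ, f x ≠ ⊤ → phi f x < 0 →
      ∀ i j : Fin n, (∀ i' j' : Fin n, slopeZ f x i j ≤ slopeZ f x i' j') →
        tau f (x + chi i - chi j) = tau f x - 2) ∧
    (∀ x0 : Fin n → ℤ, f x0 ≠ ⊤ →
      ∀ seq : ℕ → (Fin n → ℤ), seq 0 = x0 →
      (∀ m : ℕ,
        (phi f (seq m) < 0 →
          ∃ i j : Fin n,
            (∀ i' j' : Fin n, slopeZ f (seq m) i j ≤ slopeZ f (seq m) i' j') ∧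
            seq (m + 1) = seq m + chi i - chi j) ∧
        (phi f (seq m) = 0 → seq (m + 1) = seq m)) →
      ∀ T : ℕ, 2 * (T : ℤ) = tau f x0 →
        IsArgmin f (seq T) ∧ norm1 (seq T - x0) = tau f x0 ∧
        ∀ m : ℕ, m < T → phi f (seq m) < 0) := by
  constructor
  · intro x hx hphi i j hsteep
    exact SD19.step_tau hbot hM hbdd hx
      (lt_of_le_of_lt (SD19.slope_le_phi hsteep) hphi) hsteep
  · intro x0 hx0 seq hseq0 hstep T hT
    have inv : ∀ m : ℕ, m ≤ T → f (seq m) ≠ ⊤ ∧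
        tau f (seq m) = tau f x0 - 2 * (m : ℤ) ∧
        norm1 (seq m - x0) ≤ 2 * (m : ℤ) := by
      intro m
      induction m with
      | zero =>
        intro _
        refine ⟨by rw [hseq0]; exact hx0, ?_, ?_⟩
        · rw [hseq0]; push_cast; ring
        · simp [hseq0, sub_self, SD19.norm1_zero]
      | succ m ih =>
        intro hm
        obtain ⟨hdom, htau, hnorm⟩ := ih (Nat.le_of_succ_le hm)
        have hmZ : (m : ℤ) < (T : ℤ) := by exact_mod_cast hm
        have htaupos : 0 < tau f (seq m) := by omega
        have hphin : phi f (seq m) < 0 := SD19.phi_neg_of_tau_pos hbot hM hdom htaupos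
        obtain ⟨i, j, hst, hse⟩ := (hstep m).1 hphin
        have hneg : slopeZ f (seq m) i j < 0 :=
          lt_of_le_of_lt (SD19.slope_le_phi hst) hphin
        have hij : i ≠ j := SD19.slope_ne_of_neg hbot hdom hneg
        have hstep_tau := SD19.step_tau hbot hM hbdd hdom hneg hst
        have hdom' := (SD19.slope_neg_dom hbot hdom hneg).1
        refine ⟨by rw [hse]; exact hdom', ?_, ?_⟩
        · rw [hse, hstep_tau, htau]; push_cast; ring
        · rw [hse]
          have hb : norm1 (seq m + chi i - chi j - x0) ≤ norm1 (seq m - x0) + 2 := by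
            rw [SD19.dist_step (seq m) x0 hij]
            split_ifs <;> omega
          push_cast
          omega
    obtain ⟨hdomT, htauT, hnormT⟩ := inv T le_rfl
    have htau0 : tau f (seq T) = 0 := by omega
    have hargT : IsArgmin f (seq T) := by
      obtain ⟨z, hz, hzd⟩ := SD19.exists_tau (SD19.exists_argmin hbot hM hbdd) (seq T)
      rw [htau0] at hzd
      have hzz := SD19.eq_of_norm1_sub_eq_zero hzd
      rwa [hzz] at hz
    have hge : tau f x0 ≤ norm1 (seq T - x0) := SD19.tau_le hargT
    refine ⟨hargT, by omega, ?_⟩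
    intro m hm
    obtain ⟨hdom, htau, _⟩ := inv m hm.le
    have hmZ : (m : ℤ) < (T : ℤ) := by exact_mod_cast hm
    exact SD19.phi_neg_of_tau_pos hbot hM hdom (by omega)
end
end
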